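/- Let G be a graph without isolated vertices and let 0 ≤ w_v ≤ w_e be weights. If S_wmd is a minimum-weight mixed dominating set of G, then w(S_wmd) ≤ w_v·τ(G) ≤ 2·w(S_wmd), where τ(G) is the minimum size of a vertex cover of G. -/

import Mathlib

/-- Mixed dominating set, see paper. -/
def IsMixedDomSet {V : Type*} (G : SimpleGraph V) (VD : Finset V) (ED : Finset (Sym2 V)) :
    Prop :=
  (∀ e ∈ ED, e ∈ G.edgeSet) ∧
  (∀ v : V, v ∉ VD → (∃ e ∈ ED, v ∈ e) ∨ ∃ u ∈ VD, G.Adj v u) ∧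
  (∀ e ∈ G.edgeSet, e ∉ ED → ∃ v ∈ e, v ∈ VD ∨ ∃ f ∈ ED, v ∈ f)

/-- A vertex cover contains at least one endpoint of every edge. -/
def IsVertexCover {V : Type*} (G : SimpleGraph V) (C : Finset V) : Prop :=
  ∀ ⦃u w : V⦄, G.Adj u w → u ∈ C ∨ w ∈ C

/-- Let `G` have no isolated vertices and `0 ≤ w_v ≤ w_e`. If `S_wmd = (SVD, SED)` is a
minimum-weight mixed dominating set, then `w(S_wmd) ≤ w_v * τ(G) ≤ 2 * w(S_wmd)`. -/
theorem minWeight_mixedDomSet_between_tau {V : Type*} (G : SimpleGraph V)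
    (hiso : ∀ v : V, ∃ u : V, G.Adj v u)
    (wv we : ℝ) (hwv : 0 ≤ wv) (hwe : wv ≤ we)
    (SVD : Finset V) (SED : Finset (Sym2 V)) (hS : IsMixedDomSet G SVD SED)
    (hSmin : ∀ (VD : Finset V) (ED : Finset (Sym2 V)), IsMixedDomSet G VD ED →
      wv * SVD.card + we * SED.card ≤ wv * VD.card + we * ED.card)
    (τ : ℕ) (hτ : ∃ C₀ : Finset V, IsVertexCover G C₀ ∧ C₀.card = τ)
    (hτmin : ∀ C₀ : Finset V, IsVertexCover G C₀ → τ ≤ C₀.card) :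
    wv * SVD.card + we * SED.card ≤ wv * τ ∧
    wv * τ ≤ 2 * (wv * SVD.card + we * SED.card) := by
  classical
  obtain ⟨C₀, hC₀, hC₀card⟩ := hτ
  -- First inequality: (C₀, ∅) is a mixed dominating set
  have h1 : wv * SVD.card + we * SED.card ≤ wv * τ := by
    have hmds : IsMixedDomSet G C₀ (∅ : Finset (Sym2 V)) := by
      refine ⟨fun e he => absurd he (Finset.notMem_empty e), ?_, ?_⟩
      · intro v hv
        obtain ⟨u, hu⟩ := hiso v
        rcases hC₀ hu with h | h
        · exact absurd h hv
        · exact Or.inr ⟨u, h, hu⟩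
      · intro e he _
        induction e using Sym2.ind with
        | _ a b =>
          have hab : G.Adj a b := he
          rcases hC₀ hab with h | h
          · exact ⟨a, Sym2.mem_mk_left a b, Or.inl h⟩
          · exact ⟨b, Sym2.mem_mk_right a b, Or.inl h⟩
    have := hSmin C₀ ∅ hmds
    simpa [hC₀card] using this
  refine ⟨h1, ?_⟩
  -- Second inequality: SVD ∪ endpoints of SED is a vertex cover
  set C : Finset V := SVD ∪ SED.biUnion (fun e => {e.out.1, e.out.2}) with hC
  have hmemC : ∀ v : V, ∀ e ∈ SED, v ∈ e → v ∈ C := by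
    intro v e he hv
    refine Finset.mem_union_right _ (Finset.mem_biUnion.2 ⟨e, he, ?_⟩)
    have : v ∈ Sym2.mk e.out.1 e.out.2 := by rw [Sym2.mk, e.out_eq]; exact hv
    rcases Sym2.mem_iff.1 this with h | h
    · rw [h]; exact Finset.mem_insert_self _ _
    · rw [h]; exact Finset.mem_insert_of_mem (Finset.mem_singleton_self _)
  have hvc : IsVertexCover G C := by
    intro u w huw
    by_cases hE : Sym2.mk u w ∈ SED
    · exact Or.inl (hmemC u _ hE (Sym2.mem_mk_left u w))
    · obtain ⟨v, hv, hv'⟩ := hS.2.2 (Sym2.mk u w) huw hE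
      have hvC : v ∈ C := by
        rcases hv' with h | ⟨f, hf, hvf⟩
        · exact Finset.mem_union_left _ h
        · exact hmemC v f hf hvf
      rcases Sym2.mem_iff.1 hv with h | h
      · exact Or.inl (h ▸ hvC)
      · exact Or.inr (h ▸ hvC)
  have hcard : (C.card : ℝ) ≤ SVD.card + 2 * SED.card := by
    have h2 : C.card ≤ SVD.card + (SED.biUnion (fun e => {e.out.1, e.out.2})).card :=
      Finset.card_union_le _ _
    have h3 : (SED.biUnion (fun e => {e.out.1, e.out.2})).card ≤ 2 * SED.card := by
      calc (SED.biUnion (fun e => {e.out.1, e.out.2})).card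
          ≤ ∑ e ∈ SED, ({e.out.1, e.out.2} : Finset V).card := Finset.card_biUnion_le
        _ ≤ ∑ _e ∈ SED, 2 := by
            refine Finset.sum_le_sum fun e _ => ?_
            exact (Finset.card_insert_le _ _).trans (by simp)
        _ = 2 * SED.card := by rw [Finset.sum_const, smul_eq_mul, mul_comm]
    have := h2.trans (Nat.add_le_add_left h3 _)
    calc (C.card : ℝ) ≤ ((SVD.card + 2 * SED.card : ℕ) : ℝ) := by exact_mod_cast this
      _ = SVD.card + 2 * SED.card := by push_cast; ring
  have hτC : (τ : ℝ) ≤ C.card := by exact_mod_cast hτmin C hvc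
  have hSED : (0 : ℝ) ≤ SED.card := by positivity
  have hSVD : (0 : ℝ) ≤ SVD.card := by positivity
  nlinarith [mul_le_mul_of_nonneg_left (hτC.trans hcard) hwv,
    mul_le_mul_of_nonneg_right hwe hSED, mul_nonneg hwv hSVD]
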